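/- Let G be an unmixed bipartite graph. Then the semigroup ring R_G generated over K by the monomials u_C = ∏_{v∈C} v, C ranging over minimal vertex covers of G, is normal. -/
import Mathlib


open Finset

/-- `C` is a vertex cover of the graph `G`. -/
def IsVC {α : Type*} (G : SimpleGraph α) (C : Finset α) : Prop :=
  ∀ ⦃u v : α⦄, G.Adj u v → u ∈ C ∨ v ∈ C

/-- `C` is a minimal vertex cover of the graph `G`. -/
def IsMinVC {α : Type*} (G : SimpleGraph α) (C : Finset α) : Prop :=
  IsVC G C ∧ ∀ C' ⊂ C, ¬ IsVC G C'

/-- `G` is unmixed: all minimal vertex covers have the same cardinality. -/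
def Unmixed {α : Type*} (G : SimpleGraph α) : Prop :=
  ∀ C C' : Finset α, IsMinVC G C → IsMinVC G C' → C.card = C'.card

/-- `G` is bipartite with respect to the given sum decomposition of its vertex set:
all edges go between the two parts. -/
def Bip {m n : ℕ} (G : SimpleGraph (Fin m ⊕ Fin n)) : Prop :=
  (∀ i j, ¬ G.Adj (Sum.inl i) (Sum.inl j)) ∧ ∀ i j, ¬ G.Adj (Sum.inr i) (Sum.inr j)

/-- the set `{x_i : i ∈ S} ∪ {y_j : j ∉ S}`, where `x_i = Sum.inl i`, `y_j = Sum.inr j`. -/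
def coverOf {n : ℕ} (S : Finset (Fin n)) : Finset (Fin n ⊕ Fin n) :=
  S.image Sum.inl ∪ Sᶜ.image Sum.inr

/-- the "x-part" `C̄ = {i : x_i ∈ C}` of a set of vertices `C`. -/
def xpart {n : ℕ} (C : Finset (Fin n ⊕ Fin n)) : Finset (Fin n) :=
  Finset.univ.filter fun i => Sum.inl i ∈ C

open MvPolynomial

/-- the type of minimal vertex covers of `G` -/
def MV {n : ℕ} (G : SimpleGraph (Fin n ⊕ Fin n)) : Type :=
  {C : Finset (Fin n ⊕ Fin n) // IsMinVC G C}

/-- the squarefree monomial `u_C = ∏_{v ∈ C} v` -/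
noncomputable def coverMonomial {n : ℕ} (K : Type*) [CommSemiring K]
    (C : Finset (Fin n ⊕ Fin n)) : MvPolynomial (Fin n ⊕ Fin n) K :=
  ∏ v ∈ C, X v

/-- the `K`-algebra map `z_C ↦ u_C`; the toric ideal `I_G` is its kernel. -/
noncomputable def coverMap {n : ℕ} (K : Type*) [CommSemiring K]
    (G : SimpleGraph (Fin n ⊕ Fin n)) :
    MvPolynomial (MV G) K →ₐ[K] MvPolynomial (Fin n ⊕ Fin n) K :=
  aeval fun C => coverMonomial K C.1

/-! ### Auxiliary results: weight components -/

section Weight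

variable {σ : Type*} {K : Type*} [Field K]

/-- graded component w.r.t. a weight `φ` -/
noncomputable def wcomp (φ : (σ →₀ ℕ) → ℤ) (m : ℤ) (p : MvPolynomial σ K) :
    MvPolynomial σ K :=
  ∑ w ∈ p.support.filter (fun w => φ w = m), monomial w (coeff w p)

lemma coeff_wcomp (φ : (σ →₀ ℕ) → ℤ) (m : ℤ) (p : MvPolynomial σ K) (u : σ →₀ ℕ) :
    coeff u (wcomp φ m p) = if φ u = m then coeff u p else 0 := by
  classical
  rw [wcomp, coeff_sum]
  simp only [coeff_monomial, Finset.sum_ite_eq', Finset.mem_filter]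
  by_cases h1 : φ u = m <;> by_cases h2 : u ∈ p.support <;>
    simp_all [MvPolynomial.notMem_support_iff]

noncomputable def wcompHom (φ : (σ →₀ ℕ) → ℤ) (m : ℤ) :
    MvPolynomial σ K →+ MvPolynomial σ K where
  toFun := wcomp φ m
  map_zero' := by ext u; simp [coeff_wcomp]
  map_add' p q := by ext u; simp only [coeff_wcomp, coeff_add]; split_ifs <;> simp

lemma wcompHom_apply (φ : (σ →₀ ℕ) → ℤ) (m : ℤ) (p : MvPolynomial σ K) :
    wcompHom φ m p = wcomp φ m p := rfl

lemma wcomp_eq_zero {φ : (σ →₀ ℕ) → ℤ} {m : ℤ} {p : MvPolynomial σ K}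
    (h : ∀ w ∈ p.support, m < φ w) : wcomp φ m p = 0 := by
  ext u
  rw [coeff_wcomp, coeff_zero]
  split_ifs with h1
  · by_contra hc
    exact absurd h1.symm (ne_of_lt (h u (mem_support_iff.mpr hc)))
  · rfl

lemma support_mul_bound {φ : (σ →₀ ℕ) → ℤ} (hφadd : ∀ a b, φ (a + b) = φ a + φ b)
    {p q : MvPolynomial σ K} {a b : ℤ}
    (hp : ∀ w ∈ p.support, a ≤ φ w) (hq : ∀ w ∈ q.support, b ≤ φ w) :
    ∀ w ∈ (p * q).support, a + b ≤ φ w := by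
  classical
  intro w hw
  obtain ⟨x, hx, y, hy, rfl⟩ := Finset.mem_add.mp (MvPolynomial.support_mul p q hw)
  rw [hφadd]
  exact add_le_add (hp x hx) (hq y hy)

lemma wcomp_mul {φ : (σ →₀ ℕ) → ℤ} (hφadd : ∀ a b, φ (a + b) = φ a + φ b)
    {p q : MvPolynomial σ K} {a b : ℤ}
    (hp : ∀ w ∈ p.support, a ≤ φ w) (hq : ∀ w ∈ q.support, b ≤ φ w) :
    wcomp φ (a + b) (p * q) = wcomp φ a p * wcomp φ b q := by
  classical
  ext u
  rw [coeff_wcomp]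
  by_cases hu : φ u = a + b
  · rw [if_pos hu, coeff_mul, coeff_mul]
    apply Finset.sum_congr rfl
    rintro ⟨x, y⟩ hxy
    have hsum : x + y = u := Finset.HasAntidiagonal.mem_antidiagonal.mp hxy
    simp only [coeff_wcomp]
    by_cases hx : coeff x p = 0
    · simp [hx]
    by_cases hy : coeff y q = 0
    · simp [hy]
    have h1 := hp x (mem_support_iff.mpr hx)
    have h2 := hq y (mem_support_iff.mpr hy)
    have h3 : φ x + φ y = a + b := by rw [← hφadd, hsum, hu]
    have hxa : φ x = a := by omega
    have hyb : φ y = b := by omega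
    rw [if_pos hxa, if_pos hyb]
  · rw [if_neg hu, coeff_mul]
    symm
    apply Finset.sum_eq_zero
    rintro ⟨x, y⟩ hxy
    have hsum : x + y = u := Finset.HasAntidiagonal.mem_antidiagonal.mp hxy
    simp only [coeff_wcomp]
    by_cases hxa : φ x = a
    · by_cases hyb : φ y = b
      · exact absurd (by rw [← hsum, hφadd, hxa, hyb]) hu
      · rw [if_neg hyb, mul_zero]
    · rw [if_neg hxa, zero_mul]

lemma wcomp_pow {φ : (σ →₀ ℕ) → ℤ} (hφadd : ∀ a b, φ (a + b) = φ a + φ b)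
    (hφ0 : φ 0 = 0) {p : MvPolynomial σ K} {a : ℤ}
    (hp : ∀ w ∈ p.support, a ≤ φ w) (k : ℕ) :
    (∀ w ∈ (p ^ k).support, (k : ℤ) * a ≤ φ w) ∧
      wcomp φ ((k : ℤ) * a) (p ^ k) = (wcomp φ a p) ^ k := by
  classical
  induction k with
  | zero =>
    constructor
    · intro w hw
      have : w = 0 := by
        simpa [Finset.mem_singleton] using MvPolynomial.support_monomial_subset
          (s := 0) (a := (1 : K)) (by simpa [pow_zero] using hw)
      simp [this, hφ0]
    · simp only [pow_zero, Nat.cast_zero, zero_mul]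
      ext u
      rw [coeff_wcomp]
      by_cases hu : u = 0
      · simp [hu, hφ0]
      · have h1 : coeff u (1 : MvPolynomial σ K) = 0 := by
          rw [MvPolynomial.coeff_one, if_neg (fun h => hu h.symm)]
        rw [h1]
        simp
  | succ k ih =>
    have hsupp : ∀ w ∈ (p ^ k * p).support, (k : ℤ) * a + a ≤ φ w :=
      support_mul_bound hφadd ih.1 hp
    have heq : wcomp φ ((k : ℤ) * a + a) (p ^ k * p) =
        wcomp φ ((k : ℤ) * a) (p ^ k) * wcomp φ a p := wcomp_mul hφadd ih.1 hp
    have hcast : ((k : ℤ) + 1) * a = (k : ℤ) * a + a := by ring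
    constructor
    · intro w hw
      rw [pow_succ] at hw
      push_cast
      rw [hcast]
      exact hsupp w hw
    · rw [pow_succ, pow_succ, ← ih.2, ← heq]
      push_cast
      rw [hcast]

set_option synthInstance.maxHeartbeats 1000000 in
theorem support_nonneg_of_integral (A : Subalgebra K (MvPolynomial σ K))
    (φ : (σ →₀ ℕ) → ℤ) (hφadd : ∀ a b, φ (a + b) = φ a + φ b) (hφ0 : φ 0 = 0)
    (hA : ∀ f ∈ A, ∀ w ∈ f.support, 0 ≤ φ w) {p : MvPolynomial σ K}
    (hp : IsIntegral A p) : ∀ w ∈ p.support, 0 ≤ φ w := by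
  classical
  intro w₀ hw₀
  by_contra hneg
  push_neg at hneg
  have hsupp : p.support.Nonempty := ⟨w₀, hw₀⟩
  obtain ⟨w₁, hw₁, hmin⟩ := p.support.exists_min_image φ hsupp
  set μ := φ w₁ with hμdef
  have hμneg : μ < 0 := lt_of_le_of_lt (hmin w₀ hw₀) hneg
  obtain ⟨q, hqmonic, hqeval⟩ := hp
  set N := q.natDegree with hN
  have hexp : (0 : MvPolynomial σ K) =
      (∑ i ∈ Finset.range N, algebraMap (↥A) (MvPolynomial σ K) (q.coeff i) * p ^ i) + p ^ N := by
    rw [← hqeval, Polynomial.eval₂_eq_sum_range, Finset.sum_range_succ, ← hN,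
      hqmonic.coeff_natDegree, map_one, one_mul]
  have h0 := congrArg (wcompHom (K := K) φ ((N : ℤ) * μ)) hexp
  rw [map_zero, map_add, map_sum] at h0
  have hpow := wcomp_pow hφadd hφ0 hmin N
  have hterm : ∀ i ∈ Finset.range N,
      wcompHom (K := K) φ ((N : ℤ) * μ)
        (algebraMap (↥A) (MvPolynomial σ K) (q.coeff i) * p ^ i) = 0 := by
    intro i hi
    have hi' : i < N := Finset.mem_range.mp hi
    rw [wcompHom_apply]
    apply wcomp_eq_zero
    intro w hw
    have hb := support_mul_bound hφadd (hA _ (q.coeff i).2) (wcomp_pow hφadd hφ0 hmin i).1 w hw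
    have hlt : (N : ℤ) * μ < (i : ℤ) * μ :=
      mul_lt_mul_of_neg_right (by exact_mod_cast hi') hμneg
    linarith
  rw [Finset.sum_eq_zero hterm, zero_add, wcompHom_apply, hpow.2] at h0
  have hne : wcomp φ μ p ≠ 0 := by
    intro hzero
    have hc := congrArg (coeff w₁) hzero
    rw [coeff_wcomp, if_pos rfl, coeff_zero] at hc
    exact (mem_support_iff.mp hw₁) hc
  exact pow_ne_zero N hne h0.symm

end Weight

/-! ### Auxiliary results: combinatorics of minimal vertex covers -/

lemma mem_coverOf_inl {n : ℕ} {S : Finset (Fin n)} {i : Fin n} :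
    Sum.inl i ∈ coverOf S ↔ i ∈ S := by
  simp [coverOf]

lemma mem_coverOf_inr {n : ℕ} {S : Finset (Fin n)} {j : Fin n} :
    Sum.inr j ∈ coverOf S ↔ j ∉ S := by
  simp [coverOf]

lemma card_coverOf {n : ℕ} (S : Finset (Fin n)) : (coverOf S).card = n := by
  rw [coverOf, Finset.card_union_of_disjoint, Finset.card_image_of_injective _ Sum.inl_injective,
    Finset.card_image_of_injective _ Sum.inr_injective, Finset.card_compl, Fintype.card_fin]
  · have := Finset.card_le_univ S
    simp only [Finset.card_univ, Fintype.card_fin] at this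
    omega
  · simp only [Finset.disjoint_left, Finset.mem_image]
    rintro v ⟨i, _, rfl⟩ ⟨j, _, h⟩
    exact Sum.inl_ne_inr h.symm

section Graph

variable {n : ℕ} {G : SimpleGraph (Fin n ⊕ Fin n)}

/-- a vertex cover of the form `coverOf S` is automatically minimal -/
lemma minVC_coverOf (hmatch : ∀ i, G.Adj (Sum.inl i) (Sum.inr i)) {S : Finset (Fin n)}
    (hS : IsVC G (coverOf S)) : IsMinVC G (coverOf S) := by
  refine ⟨hS, fun C' hsub hVC => ?_⟩
  obtain ⟨v, hv, hvn⟩ := Finset.exists_of_ssubset hsub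
  cases v with
  | inl i =>
    rcases hVC (hmatch i) with h | h
    · exact hvn h
    · exact (mem_coverOf_inr.mp (hsub.subset h)) (mem_coverOf_inl.mp hv)
  | inr j =>
    rcases hVC (hmatch j) with h | h
    · exact (mem_coverOf_inr.mp hv) (mem_coverOf_inl.mp (hsub.subset h))
    · exact hvn h

lemma IsVC_coverOf_empty (hbip : Bip G) : IsVC G (coverOf (∅ : Finset (Fin n))) := by
  intro u v huv
  cases u with
  | inl i =>
    cases v with
    | inl j => exact absurd huv (hbip.1 i j)
    | inr j => exact Or.inr (mem_coverOf_inr.mpr (Finset.notMem_empty j))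
  | inr i =>
    cases v with
    | inl j => exact Or.inl (mem_coverOf_inr.mpr (Finset.notMem_empty i))
    | inr j => exact absurd huv (hbip.2 i j)

/-- every minimal vertex cover has the form `coverOf S` -/
lemma minVC_eq_coverOf (hbip : Bip G) (hmatch : ∀ i, G.Adj (Sum.inl i) (Sum.inr i))
    (hunm : Unmixed G) {C : Finset (Fin n ⊕ Fin n)} (hC : IsMinVC G C) :
    C = coverOf (xpart C) := by
  have hcard : C.card = n := by
    rw [hunm C (coverOf ∅) hC (minVC_coverOf hmatch (IsVC_coverOf_empty hbip)), card_coverOf]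
  have hone : ∀ i : Fin n, Sum.inl i ∈ C ∨ Sum.inr i ∈ C := fun i => hC.1 (hmatch i)
  have hsub : coverOf (xpart C) ⊆ C := by
    intro v hv
    cases v with
    | inl i =>
      have := mem_coverOf_inl.mp hv
      simpa [xpart] using this
    | inr i =>
      have hi : i ∉ xpart C := mem_coverOf_inr.mp hv
      have : Sum.inl i ∉ C := by simpa [xpart] using hi
      exact (hone i).resolve_left this
  exact (Finset.eq_of_subset_of_card_le hsub (by rw [hcard, card_coverOf])).symm

/-- the preorder on `Fin n` determined by the lattice of minimal vertex covers -/
def pre (G : SimpleGraph (Fin n ⊕ Fin n)) (i j : Fin n) : Prop :=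
  ∀ S : Finset (Fin n), IsVC G (coverOf S) → j ∈ S → i ∈ S

lemma pre_of_adj {i j : Fin n} (h : G.Adj (Sum.inl i) (Sum.inr j)) : pre G i j :=
  fun _ hS hj =>
    mem_coverOf_inl.mp ((hS h).resolve_right (fun hr => (mem_coverOf_inr.mp hr) hj))

/-- the saturated semigroup of exponents -/
def QQ (G : SimpleGraph (Fin n ⊕ Fin n)) : Set ((Fin n ⊕ Fin n) →₀ ℕ) :=
  {w | (∀ i j, w (Sum.inl i) + w (Sum.inr i) = w (Sum.inl j) + w (Sum.inr j)) ∧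
       ∀ i j, pre G i j → w (Sum.inl j) ≤ w (Sum.inl i)}

lemma zero_mem_QQ : (0 : (Fin n ⊕ Fin n) →₀ ℕ) ∈ QQ G := by
  constructor <;> intro i j <;> simp

lemma add_mem_QQ {w₁ w₂ : (Fin n ⊕ Fin n) →₀ ℕ} (h₁ : w₁ ∈ QQ G) (h₂ : w₂ ∈ QQ G) :
    w₁ + w₂ ∈ QQ G := by
  constructor
  · intro i j
    have a1 := h₁.1 i j
    have a2 := h₂.1 i j
    simp only [Finsupp.add_apply]
    omega
  · intro i j hp
    have a1 := h₁.2 i j hp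
    have a2 := h₂.2 i j hp
    simp only [Finsupp.add_apply]
    omega

end Graph

/-- the indicator exponent of a finset of variables -/
noncomputable def indC {n : ℕ} (C : Finset (Fin n ⊕ Fin n)) : (Fin n ⊕ Fin n) →₀ ℕ :=
  ∑ v ∈ C, Finsupp.single v 1

lemma indC_apply {n : ℕ} (C : Finset (Fin n ⊕ Fin n)) (v : Fin n ⊕ Fin n) :
    indC C v = if v ∈ C then 1 else 0 := by
  classical
  rw [indC, Finset.sum_apply']
  simp [Finsupp.single_apply, Finset.sum_ite_eq']

lemma coverMonomial_eq {n : ℕ} (K : Type*) [CommSemiring K] (C : Finset (Fin n ⊕ Fin n)) :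
    coverMonomial K C = monomial (indC C) 1 := by
  classical
  induction C using Finset.induction with
  | empty => simp [coverMonomial, indC]
  | @insert a s ha ih =>
    have h1 : indC (insert a s) = Finsupp.single a 1 + indC s := by
      rw [indC, indC, Finset.sum_insert ha]
    rw [coverMonomial, Finset.prod_insert ha, ← coverMonomial, ih, h1, X, monomial_mul, one_mul]

section Main

variable {n : ℕ} {G : SimpleGraph (Fin n ⊕ Fin n)}

lemma indC_mem_QQ (hbip : Bip G) (hmatch : ∀ i, G.Adj (Sum.inl i) (Sum.inr i))
    (hunm : Unmixed G) {C : Finset (Fin n ⊕ Fin n)} (hC : IsMinVC G C) :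
    indC C ∈ QQ G := by
  have hCeq := minVC_eq_coverOf hbip hmatch hunm hC
  set S := xpart C with hS
  have hVC : IsVC G (coverOf S) := hCeq ▸ hC.1
  constructor
  · intro i j
    rw [hCeq]
    simp only [indC_apply, mem_coverOf_inl, mem_coverOf_inr]
    by_cases hi : i ∈ S <;> by_cases hj : j ∈ S <;> simp [hi, hj]
  · intro i j hp
    rw [hCeq]
    simp only [indC_apply, mem_coverOf_inl]
    by_cases hj : j ∈ S
    · simp [hj, hp S hVC hj]
    · simp [hj]

/-- every monomial with exponent in `QQ G` lies in the semigroup ring -/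
lemma monomial_mem_adjoin (K : Type*) [Field K] (hbip : Bip G)
    (hmatch : ∀ i, G.Adj (Sum.inl i) (Sum.inr i)) :
    ∀ w ∈ QQ G, (monomial w (1 : K)) ∈ (Algebra.adjoin K
      {f : MvPolynomial (Fin n ⊕ Fin n) K |
        ∃ C : Finset (Fin n ⊕ Fin n), IsMinVC G C ∧ f = coverMonomial K C}) := by
  classical
  set A := Algebra.adjoin K {f : MvPolynomial (Fin n ⊕ Fin n) K |
      ∃ C : Finset (Fin n ⊕ Fin n), IsMinVC G C ∧ f = coverMonomial K C} with hAdef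
  rcases Nat.eq_zero_or_pos n with h0 | hpos
  · intro w _
    have hw0 : w = 0 := by
      subst h0
      ext v
      rcases v with i | i <;> exact absurd i.isLt (Nat.not_lt_zero _)
    rw [hw0, ← MvPolynomial.C_apply, map_one]
    exact A.one_mem
  intro w hw
  set i₀ : Fin n := ⟨0, hpos⟩ with hi₀
  suffices H : ∀ t (w : (Fin n ⊕ Fin n) →₀ ℕ), w ∈ QQ G →
      w (Sum.inl i₀) + w (Sum.inr i₀) = t → (monomial w (1 : K)) ∈ A from H _ w hw rfl
  intro t
  induction t with
  | zero =>
    intro w hw ht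
    have hw0 : w = 0 := by
      ext v
      have : ∀ i, w (Sum.inl i) + w (Sum.inr i) = 0 := fun i => by rw [hw.1 i i₀]; exact ht
      cases v with
      | inl i => have := this i; simp; omega
      | inr i => have := this i; simp; omega
    rw [hw0, ← MvPolynomial.C_apply, map_one]
    exact A.one_mem
  | succ t ih =>
    intro w hw ht
    set D : Finset (Fin n) := Finset.univ.filter (fun i => t + 1 ≤ w (Sum.inl i)) with hD
    have hDmem : ∀ i, i ∈ D ↔ t + 1 ≤ w (Sum.inl i) := by
      intro i; rw [hD]; simp
    have hsum : ∀ i, w (Sum.inl i) + w (Sum.inr i) = t + 1 := fun i => by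
      rw [hw.1 i i₀]; exact ht
    have hVC : IsVC G (coverOf D) := by
      intro u v huv
      have key : ∀ i j, G.Adj (Sum.inl i) (Sum.inr j) →
          Sum.inl i ∈ coverOf D ∨ Sum.inr j ∈ coverOf D := by
        intro i j hadj
        by_cases hj : j ∈ D
        · left
          rw [mem_coverOf_inl, hDmem]
          exact le_trans ((hDmem j).mp hj) (hw.2 i j (pre_of_adj hadj))
        · right
          rw [mem_coverOf_inr]
          exact hj
      cases u with
      | inl i =>
        cases v with
        | inl j => exact absurd huv (hbip.1 i j)
        | inr j => exact key i j huv
      | inr i =>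
        cases v with
        | inl j => exact (key j i huv.symm).symm
        | inr j => exact absurd huv (hbip.2 i j)
    have hmin : IsMinVC G (coverOf D) := minVC_coverOf hmatch hVC
    have hle : indC (coverOf D) ≤ w := by
      rw [Finsupp.le_def]
      intro v
      rw [indC_apply]
      cases v with
      | inl i =>
        split_ifs with h
        · rw [mem_coverOf_inl, hDmem] at h; omega
        · exact Nat.zero_le _
      | inr i =>
        split_ifs with h
        · rw [mem_coverOf_inr, hDmem] at h
          have := hsum i
          omega
        · exact Nat.zero_le _
    set w' := w - indC (coverOf D) with hw'def
    have hadd : w' + indC (coverOf D) = w := tsub_add_cancel_of_le hle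
    have hw'app : ∀ v, w' v = w v - indC (coverOf D) v := fun v => Finsupp.tsub_apply w _ v
    have hx : ∀ i, i ∈ D → w' (Sum.inl i) = t ∧ w' (Sum.inr i) = t - t := by
      intro i hi
      have h1 := (hDmem i).mp hi
      have h2 := hsum i
      have e1 := hw'app (Sum.inl i)
      have e2 := hw'app (Sum.inr i)
      rw [indC_apply] at e1 e2
      rw [if_pos (mem_coverOf_inl.mpr hi)] at e1
      rw [if_neg (by rw [mem_coverOf_inr]; exact fun hc => hc hi)] at e2
      omega
    have hx' : ∀ i, i ∉ D → w' (Sum.inl i) = w (Sum.inl i) ∧ w' (Sum.inr i) = w (Sum.inr i) - 1 ∧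
        1 ≤ w (Sum.inr i) ∧ w (Sum.inl i) ≤ t := by
      intro i hi
      have h1 : ¬ (t + 1 ≤ w (Sum.inl i)) := fun hc => hi ((hDmem i).mpr hc)
      have h2 := hsum i
      have e1 := hw'app (Sum.inl i)
      have e2 := hw'app (Sum.inr i)
      rw [indC_apply] at e1 e2
      rw [if_neg (by rw [mem_coverOf_inl]; exact hi)] at e1
      rw [if_pos (mem_coverOf_inr.mpr hi)] at e2
      omega
    have hxy : ∀ i, w' (Sum.inl i) + w' (Sum.inr i) = t := by
      intro i
      by_cases hi : i ∈ D
      · have := hx i hi; omega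
      · have := hx' i hi; have := hsum i; omega
    have hw'Q : w' ∈ QQ G := by
      constructor
      · intro i j
        rw [hxy i, hxy j]
      · intro i j hp
        have hle2 := hw.2 i j hp
        by_cases hj : j ∈ D
        · have hi : i ∈ D := by
            rw [hDmem]
            exact le_trans ((hDmem j).mp hj) hle2
          have := hx i hi; have := hx j hj; omega
        · by_cases hi : i ∈ D
          · have := hx i hi; have := hx' j hj; omega
          · have := hx' i hi; have := hx' j hj; omega
    have hstep : (monomial w (1 : K)) = (monomial w' (1 : K)) * coverMonomial K (coverOf D) := by
      rw [coverMonomial_eq, monomial_mul, one_mul, hadd]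
    rw [hstep]
    exact A.mul_mem (ih w' hw'Q (hxy i₀)) (Algebra.subset_adjoin ⟨coverOf D, hmin, rfl⟩)

/-- supports of elements of the semigroup ring lie in `QQ G` -/
lemma support_subset_QQ (K : Type*) [Field K] (hbip : Bip G)
    (hmatch : ∀ i, G.Adj (Sum.inl i) (Sum.inr i)) (hunm : Unmixed G) :
    ∀ f ∈ (Algebra.adjoin K {f : MvPolynomial (Fin n ⊕ Fin n) K |
        ∃ C : Finset (Fin n ⊕ Fin n), IsMinVC G C ∧ f = coverMonomial K C}),
      ∀ w ∈ f.support, w ∈ QQ G := by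
  classical
  intro f hf
  induction hf using Algebra.adjoin_induction with
  | mem x hx =>
    obtain ⟨C, hC, rfl⟩ := hx
    intro w hw
    rw [coverMonomial_eq] at hw
    have := MvPolynomial.support_monomial_subset hw
    rw [Finset.mem_singleton] at this
    rw [this]
    exact indC_mem_QQ hbip hmatch hunm hC
  | algebraMap r =>
    intro w hw
    have : w = 0 := by
      have h2 : (algebraMap K (MvPolynomial (Fin n ⊕ Fin n) K) r) = monomial 0 r := by
        rw [← MvPolynomial.C_apply]; rfl
      rw [h2] at hw
      simpa using MvPolynomial.support_monomial_subset hw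
    rw [this]
    exact zero_mem_QQ
  | add x y hx hy ihx ihy =>
    intro w hw
    rcases Finset.mem_union.mp (MvPolynomial.support_add hw) with h | h
    · exact ihx w h
    · exact ihy w h
  | mul x y hx hy ihx ihy =>
    intro w hw
    obtain ⟨u, hu, v, hv, rfl⟩ := Finset.mem_add.mp (MvPolynomial.support_mul x y hw)
    exact add_mem_QQ (ihx u hu) (ihy v hv)

end Main

set_option maxHeartbeats 2000000 in
set_option synthInstance.maxHeartbeats 1000000 in
/-- the semigroup ring `R_G`, generated over `K` by the monomials `u_C`
over minimal vertex covers `C` of an unmixed bipartite graph `G`, is normal. -/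
theorem stmt_18 {n : ℕ} (K : Type*) [Field K]
    (G : SimpleGraph (Fin n ⊕ Fin n)) (hbip : Bip G)
    (hmatch : ∀ i, G.Adj (Sum.inl i) (Sum.inr i)) (hunm : Unmixed G) :
    IsIntegrallyClosed
      (Algebra.adjoin K {f : MvPolynomial (Fin n ⊕ Fin n) K |
        ∃ C : Finset (Fin n ⊕ Fin n), IsMinVC G C ∧ f = coverMonomial K C}) := by
  classical
  set P := MvPolynomial (Fin n ⊕ Fin n) K with hP
  set A : Subalgebra K P := Algebra.adjoin K {f : MvPolynomial (Fin n ⊕ Fin n) K |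
      ∃ C : Finset (Fin n ⊕ Fin n), IsMinVC G C ∧ f = coverMonomial K C} with hAdef
  have hsuppQ : ∀ f ∈ A, ∀ w ∈ f.support, w ∈ QQ G :=
    support_subset_QQ K hbip hmatch hunm
  have hQmem : ∀ w ∈ QQ G, (monomial w (1 : K)) ∈ A := monomial_mem_adjoin K hbip hmatch
  have hmemA : ∀ p : P, (∀ w ∈ p.support, w ∈ QQ G) → p ∈ A := by
    intro p hp
    rw [p.as_sum]
    apply Subalgebra.sum_mem
    intro w hw
    have h1 : monomial w (coeff w p) = (coeff w p) • monomial w (1 : K) := by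
      rw [MvPolynomial.smul_monomial, smul_eq_mul, mul_one]
    rw [h1]
    exact Subalgebra.smul_mem _ (hQmem w (hp w hw)) _
  -- set up fraction fields
  have hginj : Function.Injective (algebraMap (↥A) (FractionRing P)) := by
    rw [IsScalarTower.algebraMap_eq (↥A) P (FractionRing P)]
    exact (IsFractionRing.injective P (FractionRing P)).comp Subtype.val_injective
  rw [isIntegrallyClosed_iff (FractionRing (↥A))]
  intro x hx
  set j : FractionRing (↥A) →ₐ[↥A] FractionRing P :=
    IsFractionRing.liftAlgHom (g := Algebra.ofId (↥A) (FractionRing P)) hginj with hj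
  have hjx : IsIntegral (↥A) (j x) := hx.map j
  have hjxP : IsIntegral P (j x) := IsIntegral.tower_top hjx
  obtain ⟨pp, hpp⟩ := IsIntegrallyClosed.isIntegral_iff.mp hjxP
  have hppint : IsIntegral (↥A) pp := by
    have hinj2 : Function.Injective (IsScalarTower.toAlgHom (↥A) P (FractionRing P)) :=
      IsFractionRing.injective P (FractionRing P)
    apply (isIntegral_algHom_iff (IsScalarTower.toAlgHom (↥A) P (FractionRing P)) hinj2).mp
    show IsIntegral (↥A) (algebraMap P (FractionRing P) pp)
    rw [hpp]
    exact hjx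
  have hQQ : ∀ w ∈ pp.support, w ∈ QQ G := by
    intro w hw
    constructor
    · intro i j'
      have h1 : (0:ℤ) ≤ ((w (Sum.inl i) : ℤ) + w (Sum.inr i))
          - ((w (Sum.inl j') : ℤ) + w (Sum.inr j')) := support_nonneg_of_integral A
        (fun w => ((w (Sum.inl i) : ℤ) + w (Sum.inr i)) - ((w (Sum.inl j') : ℤ) + w (Sum.inr j')))
        (fun a b => by simp only [Finsupp.add_apply]; push_cast; ring)
        (by simp)
        (fun f hf w' hw' => by beta_reduce; have := (hsuppQ f hf w' hw').1 i j'; omega)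
        hppint w hw
      have h2 : (0:ℤ) ≤ ((w (Sum.inl j') : ℤ) + w (Sum.inr j'))
          - ((w (Sum.inl i) : ℤ) + w (Sum.inr i)) := support_nonneg_of_integral A
        (fun w => ((w (Sum.inl j') : ℤ) + w (Sum.inr j')) - ((w (Sum.inl i) : ℤ) + w (Sum.inr i)))
        (fun a b => by simp only [Finsupp.add_apply]; push_cast; ring)
        (by simp)
        (fun f hf w' hw' => by beta_reduce; have := (hsuppQ f hf w' hw').1 i j'; omega)
        hppint w hw
      omega
    · intro i j' hp
      have h1 : (0:ℤ) ≤ (w (Sum.inl i) : ℤ) - w (Sum.inl j') := support_nonneg_of_integral A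
        (fun w => (w (Sum.inl i) : ℤ) - w (Sum.inl j'))
        (fun a b => by simp only [Finsupp.add_apply]; push_cast; ring)
        (by simp)
        (fun f hf w' hw' => by beta_reduce; have := (hsuppQ f hf w' hw').2 i j' hp; omega)
        hppint w hw
      omega
  have hppA : pp ∈ A := hmemA pp hQQ
  refine ⟨⟨pp, hppA⟩, ?_⟩
  have hjinj : Function.Injective j := j.toRingHom.injective
  apply hjinj
  rw [j.commutes ⟨pp, hppA⟩]
  show algebraMap (↥A) (FractionRing P) ⟨pp, hppA⟩ = j x
  rw [IsScalarTower.algebraMap_apply (↥A) P (FractionRing P)]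
  exact hpp
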